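/- For all α₁ ≥ 0 and α₂ ∈ ℝ there exists a constant M = M(α₁, α₂) such that every twice continuously differentiable 1-periodic function u : ℝ → ℝ with ∫₀¹ u(x)² dx = α₁ and ∫₀¹ ( (1/3)u(x)³ − u'(x)² − u''(x)² ) dx = α₂ satisfies ∫₀¹ u''(x)² dx ≤ M and ∫₀¹ u'(x)² dx ≤ M. -/

import Mathlib

open intervalIntegral MeasureTheory

/-- Key step in the proof of Lemma 2.5: the two conserved quantities of the Kawahara
equation control the `H²` norm. For all `α₁ ≥ 0` and `α₂ ∈ ℝ` there is a constant
`M = M(α₁, α₂)` such that every `C²` 1-periodic `u : ℝ → ℝ` with `∫₀¹ u² = α₁` and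
`∫₀¹ ((1/3)u³ − u'² − u''²) = α₂` satisfies `∫₀¹ u''² ≤ M` and `∫₀¹ u'² ≤ M`. -/
theorem conserved_quantities_control_H2 (α₁ α₂ : ℝ) (hα₁ : 0 ≤ α₁) :
    ∃ M : ℝ, ∀ u : ℝ → ℝ, ContDiff ℝ 2 u → (∀ x : ℝ, u (x + 1) = u x) →
      (∫ x in (0:ℝ)..1, (u x) ^ 2) = α₁ →
      (∫ x in (0:ℝ)..1,
          ((1/3) * (u x) ^ 3 - (deriv u x) ^ 2 - (iteratedDeriv 2 u x) ^ 2)) = α₂ →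
      (∫ x in (0:ℝ)..1, (iteratedDeriv 2 u x) ^ 2) ≤ M
        ∧ (∫ x in (0:ℝ)..1, (deriv u x) ^ 2) ≤ M := by
  refine ⟨(4/3) * (α₁/2 + α₁^2/9 + |α₂|), ?_⟩
  intro u hu _hper h1 h2
  have hdd : iteratedDeriv 2 u = deriv (deriv u) := by
    simp [iteratedDeriv_succ, iteratedDeriv_one]
  rw [hdd] at h2 ⊢
  have hcu : Continuous u := hu.continuous
  have hcu' : Continuous (deriv u) := hu.continuous_deriv one_le_two
  have hdu : Differentiable ℝ u := hu.differentiable two_ne_zero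
  have hcd1 : ContDiff ℝ 1 (deriv u) :=
    ((contDiff_succ_iff_deriv (n := 1)).mp (by exact_mod_cast hu)).2.2
  have hcu'' : Continuous (deriv (deriv u)) := hcd1.continuous_deriv le_rfl
  -- integrabilities
  have iu2 : IntervalIntegrable (fun x => u x ^ 2) volume 0 1 :=
    (hcu.pow 2).intervalIntegrable 0 1
  have iu3 : IntervalIntegrable (fun x => (1/3 : ℝ) * u x ^ 3) volume 0 1 :=
    (continuous_const.mul (hcu.pow 3)).intervalIntegrable 0 1
  have id1 : IntervalIntegrable (fun x => deriv u x ^ 2) volume 0 1 :=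
    (hcu'.pow 2).intervalIntegrable 0 1
  have id2 : IntervalIntegrable (fun x => deriv (deriv u) x ^ 2) volume 0 1 :=
    (hcu''.pow 2).intervalIntegrable 0 1
  set I1 : ℝ := ∫ x in (0:ℝ)..1, deriv u x ^ 2 with hI1def
  set I2 : ℝ := ∫ x in (0:ℝ)..1, deriv (deriv u) x ^ 2 with hI2def
  have hI1 : 0 ≤ I1 := integral_nonneg zero_le_one (fun x _ => sq_nonneg _)
  have hI2 : 0 ≤ I2 := integral_nonneg zero_le_one (fun x _ => sq_nonneg _)
  have hsum : (∫ x in (0:ℝ)..1, (1/3 : ℝ) * u x ^ 3) - I1 - I2 = α₂ := by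
    rw [← h2, intervalIntegral.integral_sub (iu3.sub id1) id2,
      intervalIntegral.integral_sub iu3 id1]
  -- a point where u² ≤ α₁
  have hy : ∃ y ∈ Set.Icc (0:ℝ) 1, u y ^ 2 ≤ α₁ := by
    by_contra hcon
    push_neg at hcon
    have hpos : 0 < ∫ x in (0:ℝ)..1, (u x ^ 2 - α₁) := by
      apply intervalIntegral.integral_pos one_pos
      · exact ((hcu.pow 2).sub continuous_const).continuousOn
      · intro x hx
        have := hcon x ⟨hx.1.le, hx.2⟩
        linarith
      · exact ⟨0, ⟨le_rfl, zero_le_one⟩, by have := hcon 0 ⟨le_rfl, zero_le_one⟩; linarith⟩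
    rw [intervalIntegral.integral_sub iu2 (intervalIntegrable_const), h1] at hpos
    simp at hpos
  obtain ⟨y, hy01, hyle⟩ := hy
  -- J bound
  have isum : IntervalIntegrable (fun t => u t ^ 2 + deriv u t ^ 2) volume 0 1 :=
    iu2.add id1
  set J : ℝ := ∫ t in (0:ℝ)..1, (u t ^ 2 + deriv u t ^ 2) with hJdef
  have hJval : J = α₁ + I1 := by
    rw [hJdef, intervalIntegral.integral_add iu2 id1, h1]
  have hJbdd : ∀ a b : ℝ, 0 ≤ a → a ≤ b → b ≤ 1 →
      |∫ t in a..b, 2 * u t * deriv u t| ≤ J := by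
    intro a b ha hab hb1
    have isub : IntervalIntegrable (fun t => u t ^ 2 + deriv u t ^ 2) volume a b :=
      ((hcu.pow 2).add (hcu'.pow 2)).intervalIntegrable a b
    have ig : IntervalIntegrable (fun t => 2 * u t * deriv u t) volume a b :=
      ((continuous_const.mul hcu).mul hcu').intervalIntegrable a b
    have hup : (∫ t in a..b, 2 * u t * deriv u t) ≤ ∫ t in a..b, (u t ^ 2 + deriv u t ^ 2) := by
      apply intervalIntegral.integral_mono_on hab ig isub
      intro x _
      nlinarith [sq_nonneg (u x - deriv u x)]
    have hlo : -(∫ t in a..b, (u t ^ 2 + deriv u t ^ 2)) ≤ ∫ t in a..b, 2 * u t * deriv u t := by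
      rw [← intervalIntegral.integral_neg]
      apply intervalIntegral.integral_mono_on hab isub.neg ig
      intro x _
      simp only [Pi.neg_apply]
      nlinarith [sq_nonneg (u x + deriv u x)]
    have hsubJ : (∫ t in a..b, (u t ^ 2 + deriv u t ^ 2)) ≤ J := by
      apply intervalIntegral.integral_mono_interval ha hab hb1 _ isum
      filter_upwards with x
      positivity
    rw [abs_le]
    constructor <;> linarith
  -- pointwise bound
  have key : ∀ x ∈ Set.Icc (0:ℝ) 1, u x ^ 2 ≤ 2 * α₁ + I1 := by
    intro x hx
    have hftc : ∀ a b : ℝ, (∫ t in a..b, 2 * u t * deriv u t) = u b ^ 2 - u a ^ 2 := by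
      intro a b
      apply intervalIntegral.integral_eq_sub_of_hasDerivAt
      · intro t _
        have h := ((hdu t).hasDerivAt).fun_pow 2
        refine h.congr_deriv ?_
        ring
      · exact ((continuous_const.mul hcu).mul hcu').intervalIntegrable a b
    have hdiff : u x ^ 2 - u y ^ 2 ≤ J := by
      rcases le_total y x with h | h
      · have := hJbdd y x hy01.1 h hx.2
        rw [hftc y x] at this
        exact (le_abs_self _).trans this
      · have := hJbdd x y hx.1 h hy01.2
        rw [hftc x y] at this
        have := (neg_le_abs _).trans this
        linarith
    rw [hJval] at hdiff
    linarith
  -- cube bound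
  set S : ℝ := Real.sqrt (2 * α₁ + I1) with hSdef
  have hSnn : 0 ≤ S := Real.sqrt_nonneg _
  have hSsq : S ^ 2 = 2 * α₁ + I1 := Real.sq_sqrt (by linarith)
  have habs : ∀ x ∈ Set.Icc (0:ℝ) 1, |u x| ≤ S := by
    intro x hx
    rw [← Real.sqrt_sq_eq_abs]
    exact Real.sqrt_le_sqrt (key x hx)
  have hcube : (∫ x in (0:ℝ)..1, (1/3 : ℝ) * u x ^ 3) ≤ (1/3) * (S * α₁) := by
    have hmono : (∫ x in (0:ℝ)..1, (1/3 : ℝ) * u x ^ 3)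
        ≤ ∫ x in (0:ℝ)..1, (1/3 : ℝ) * (S * u x ^ 2) := by
      apply intervalIntegral.integral_mono_on zero_le_one iu3
        ((continuous_const.mul (continuous_const.mul (hcu.pow 2))).intervalIntegrable 0 1)
      intro x hx
      have h1' := habs x hx
      have h2' := le_abs_self (u x)
      simp only [Pi.mul_apply, Pi.pow_apply, ← hSdef]
      nlinarith [sq_nonneg (u x)]
    calc (∫ x in (0:ℝ)..1, (1/3 : ℝ) * u x ^ 3)
        ≤ ∫ x in (0:ℝ)..1, (1/3 : ℝ) * (S * u x ^ 2) := hmono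
      _ = (1/3) * (S * α₁) := by
          rw [show (fun x => (1/3 : ℝ) * (S * u x ^ 2)) = (fun x => ((1/3) * S) * u x ^ 2) by
            funext x; ring]
          rw [intervalIntegral.integral_const_mul, h1]
          ring
  -- conclude
  have hmain : I1 + I2 ≤ (1/3) * (S * α₁) + |α₂| := by
    have : I1 + I2 = (∫ x in (0:ℝ)..1, (1/3 : ℝ) * u x ^ 3) - α₂ := by linarith
    have h' := neg_abs_le α₂
    linarith
  constructor <;> nlinarith [sq_nonneg (S / 2 - α₁ / 3), abs_nonneg α₂]
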